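/- Let G be a 1-walk-regular graph with canonical vector coloring i ↦ p_i ∈ ℝ^d, where d is the multiplicity of the least eigenvalue. Define p_e = p_i p_jᵀ + p_j p_iᵀ for each edge e = {i,j}. Then G is uniquely vector colorable if and only if the span of {p_e : e ∈ E(G)} in the space of symmetric d×d matrices has dimension d(d+1)/2, i.e., equals the full space of symmetric matrices. -/

import Mathlib

open SimpleGraph Finset

section aux

variable {d : ℕ}

/-- The submodule of symmetric real `d × d` matrices. -/
def symSub (d : ℕ) : Submodule ℝ (Matrix (Fin d) (Fin d) ℝ) where
  carrier := {M | M.IsSymm}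
  add_mem' := fun hA hB => hA.add hB
  zero_mem' := Matrix.isSymm_zero
  smul_mem' := fun c _ h => h.smul c

lemma mem_symSub {M : Matrix (Fin d) (Fin d) ℝ} : M ∈ symSub d ↔ M.IsSymm := Iff.rfl

/-- Symmetric matrices are coordinatized by upper-triangular positions. -/
noncomputable def symEquivFun (d : ℕ) : symSub d ≃ₗ[ℝ] ({q : Fin d × Fin d // q.1 ≤ q.2} → ℝ) where
  toFun M q := M.1 q.1.1 q.1.2
  map_add' _ _ := rfl
  map_smul' _ _ := rfl
  invFun f := ⟨Matrix.of fun i j =>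
      if h : i ≤ j then f ⟨(i, j), h⟩ else f ⟨(j, i), le_of_not_ge h⟩, by
    apply Matrix.IsSymm.ext
    intro i j
    rcases le_or_gt i j with h | h
    · rcases eq_or_lt_of_le h with rfl | hlt
      · rfl
      · simp only [Matrix.of_apply]
        rw [dif_neg (not_le_of_gt hlt), dif_pos h]
    · simp only [Matrix.of_apply]
      rw [dif_pos h.le, dif_neg (not_le_of_gt h)]⟩
  left_inv M := by
    apply Subtype.ext
    ext i j
    show (if h : i ≤ j then _ else _) = M.1 i j
    split_ifs with h
    · rfl
    · exact M.2.apply i j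
  right_inv f := by
    funext q
    show (if h : q.1.1 ≤ q.1.2 then f _ else f _) = f q
    rw [dif_pos q.2]

lemma card_pairs (d : ℕ) :
    Fintype.card {q : Fin d × Fin d // q.1 ≤ q.2} = d * (d + 1) / 2 := by
  have e : {q : Fin d × Fin d // q.1 ≤ q.2} ≃ Σ j : Fin d, Fin (j + 1) :=
    { toFun := fun q => ⟨q.1.2, ⟨q.1.1, Nat.lt_succ_of_le q.2⟩⟩
      invFun := fun s => ⟨(⟨s.2, lt_of_le_of_lt (Nat.le_of_lt_succ s.2.2) s.1.2⟩, s.1),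
        Nat.le_of_lt_succ s.2.2⟩
      left_inv := fun q => rfl
      right_inv := fun s => rfl }
  rw [Fintype.card_congr e, Fintype.card_sigma]
  simp only [Fintype.card_fin]
  rw [Fin.sum_univ_eq_sum_range (fun i => i + 1) d]
  have h : ∑ i ∈ Finset.range (d + 1), i = (∑ i ∈ Finset.range d, (i + 1)) + 0 :=
    Finset.sum_range_succ' _ _
  rw [Finset.sum_range_id] at h
  have h2 : ∑ i ∈ Finset.range d, (i + 1) = (d + 1) * d / 2 := by
    simpa using h.symm
  rw [h2, Nat.mul_comm]

lemma finrank_symSub (d : ℕ) : Module.finrank ℝ (symSub d) = d * (d + 1) / 2 := by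
  rw [(symEquivFun d).finrank_eq, Module.finrank_fintype_fun_eq_card, card_pairs]

noncomputable def matEquiv (d : ℕ) :
    Matrix (Fin d) (Fin d) ℝ ≃ₗ[ℝ] EuclideanSpace ℝ (Fin d × Fin d) :=
  (LinearEquiv.curry ℝ ℝ (Fin d) (Fin d)).symm.trans
    (WithLp.linearEquiv 2 ℝ ((Fin d × Fin d) → ℝ)).symm

lemma inner_matEquiv (A B : Matrix (Fin d) (Fin d) ℝ) :
    (inner ℝ (matEquiv d A) (matEquiv d B) : ℝ) = ∑ k, ∑ l, A k l * B k l := by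
  have h : (inner ℝ (matEquiv d A) (matEquiv d B) : ℝ)
      = ∑ q : Fin d × Fin d, A q.1 q.2 * B q.1 q.2 := by
    simp only [matEquiv, LinearEquiv.trans_apply, PiLp.inner_apply, RCLike.inner_apply,
      conj_trivial, WithLp.linearEquiv_symm_apply, PiLp.toLp_apply,
      LinearEquiv.coe_curry_symm, Function.uncurry]
    exact Finset.sum_congr rfl fun q _ => mul_comm _ _
  rw [h, Fintype.sum_prod_type]

lemma ip_gen {R : Matrix (Fin d) (Fin d) ℝ} (hR : R.IsSymm) (a b : Fin d → ℝ) :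
    ∑ k, ∑ l, R k l * (Matrix.vecMulVec a b + Matrix.vecMulVec b a) k l
      = 2 * dotProduct a (R.mulVec b) := by
  have h1 : ∑ k, ∑ l, R k l * (a k * b l) = dotProduct a (R.mulVec b) := by
    simp only [dotProduct, Matrix.mulVec, Finset.mul_sum]
    exact Finset.sum_congr rfl fun k _ => Finset.sum_congr rfl fun l _ => by ring
  have h2 : ∑ k, ∑ l, R k l * (b k * a l) = dotProduct a (R.mulVec b) := by
    rw [Finset.sum_comm]
    simp only [dotProduct, Matrix.mulVec, Finset.mul_sum]
    refine Finset.sum_congr rfl fun l _ => Finset.sum_congr rfl fun k _ => ?_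
    rw [show R k l = R l k from (hR.apply k l).symm]
    ring
  simp only [Matrix.add_apply, Matrix.vecMulVec_apply, mul_add, Finset.sum_add_distrib]
  rw [h1, h2]; ring


lemma diag_zero {V : Type*} [Fintype V] [DecidableEq V] (G : SimpleGraph V) [DecidableRel G.Adj]
    {d : ℕ} {τ : ℝ} (hτ : τ ≠ 0) (p : V → Fin d → ℝ)
    (hEig : ∀ l : Fin d, (G.adjMatrix ℝ).mulVec (fun i => p i l) = τ • (fun i => p i l))
    {R : Matrix (Fin d) (Fin d) ℝ}
    (hedge : ∀ i j, G.Adj i j → dotProduct (p i) (R.mulVec (p j)) = 0) (i : V) :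
    dotProduct (p i) (R.mulVec (p i)) = 0 := by
  classical
  let L : (Fin d → ℝ) →ₗ[ℝ] ℝ :=
    { toFun := fun v => dotProduct (p i) (R.mulVec v)
      map_add' := fun u v => by simp [Matrix.mulVec_add, dotProduct_add]
      map_smul' := fun c v => by simp [Matrix.mulVec_smul, dotProduct_smul] }
  have hsum : τ • p i = ∑ j : V, (SimpleGraph.adjMatrix ℝ G) i j • p j := by
    funext l
    have h := congrFun (hEig l) i
    simp only [Matrix.mulVec, dotProduct, Pi.smul_apply, smul_eq_mul] at h
    simp only [Finset.sum_apply, Pi.smul_apply, smul_eq_mul]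
    exact h.symm
  have key : τ * dotProduct (p i) (R.mulVec (p i)) = 0 := by
    calc τ * dotProduct (p i) (R.mulVec (p i)) = L (τ • p i) := by
          rw [map_smul]; rfl
      _ = L (∑ j : V, (SimpleGraph.adjMatrix ℝ G) i j • p j) := by rw [hsum]
      _ = ∑ j : V, (SimpleGraph.adjMatrix ℝ G) i j *
            dotProduct (p i) (R.mulVec (p j)) := by
          rw [map_sum]
          exact Finset.sum_congr rfl fun j _ => by rw [map_smul]; rfl
      _ = 0 := Finset.sum_eq_zero fun j _ => by
          by_cases hadj : G.Adj i j
          · rw [hedge i j hadj, mul_zero]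
          · simp [SimpleGraph.adjMatrix_apply, hadj]
  exact (mul_eq_zero.mp key).resolve_left hτ

end aux

/-- `G` is 1-walk-regular: for every `ℓ`, the diagonal of `Aˡ` is constant and the entries
of `Aˡ` on edges are constant. -/
def IsOneWalkRegular {V : Type*} [Fintype V] [DecidableEq V]
    (G : SimpleGraph V) [DecidableRel G.Adj] : Prop :=
  ∀ ℓ : ℕ, (∃ a : ℝ, ∀ i, ((G.adjMatrix ℝ) ^ ℓ) i i = a) ∧
    (∃ b : ℝ, ∀ i j, G.Adj i j → ((G.adjMatrix ℝ) ^ ℓ) i j = b)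

/-- Let `p` be the canonical vector coloring of a 1-walk-regular graph `G`, with `d` the
multiplicity of the least eigenvalue `τ`, and for each edge `{i,j}` let
`p_e = p_i p_jᵀ + p_j p_iᵀ`. Then `G` is uniquely vector colorable (equivalently,
`p_iᵀ R p_j = 0` for all symmetric `R` and all `i ~ j` or `i = j` forces `R = 0`)
iff the span of `{p_e : e ∈ E(G)}` has dimension `d(d+1)/2`. -/
theorem stmt19 {V : Type*} [Fintype V] [DecidableEq V]
    (G : SimpleGraph V) [DecidableRel G.Adj] (hG : IsOneWalkRegular G)
    (d : ℕ) (τ : ℝ) (hτ : τ ≠ 0)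
    (p : V → Fin d → ℝ)
    (hEig : ∀ l : Fin d, (G.adjMatrix ℝ).mulVec (fun i => p i l) = τ • (fun i => p i l))
    (hLeast : ∀ (μ : ℝ) (v : V → ℝ), v ≠ 0 →
      (G.adjMatrix ℝ).mulVec v = μ • v → τ ≤ μ)
    (hCanon : ∀ l l' : Fin d, ∑ i : V, p i l * p i l' =
      (Fintype.card V : ℝ) / d * (if l = l' then 1 else 0))
    (hMult : ∀ v : V → ℝ, (G.adjMatrix ℝ).mulVec v = τ • v →
      v ∈ Submodule.span ℝ (Set.range fun l : Fin d => (fun i => p i l))) :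
    ((∀ R : Matrix (Fin d) (Fin d) ℝ, R.IsSymm →
        (∀ i j : V, (G.Adj i j ∨ i = j) →
          dotProduct (p i) (R.mulVec (p j)) = 0) → R = 0)
      ↔ Module.finrank ℝ (Submodule.span ℝ
          {M : Matrix (Fin d) (Fin d) ℝ | ∃ i j : V, G.Adj i j ∧
            M = Matrix.vecMulVec (p i) (p j) + Matrix.vecMulVec (p j) (p i)})
          = d * (d + 1) / 2) := by
  classical
  set S : Set (Matrix (Fin d) (Fin d) ℝ) :=
    {M : Matrix (Fin d) (Fin d) ℝ | ∃ i j : V, G.Adj i j ∧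
      M = Matrix.vecMulVec (p i) (p j) + Matrix.vecMulVec (p j) (p i)} with hS
  have hSsym : ∀ M ∈ S, M ∈ symSub d := by
    rintro M ⟨i, j, hij, rfl⟩
    refine Matrix.IsSymm.ext fun k l => ?_
    simp only [Matrix.add_apply, Matrix.vecMulVec_apply]
    ring
  have hspan_le : Submodule.span ℝ S ≤ symSub d := Submodule.span_le.2 hSsym
  constructor
  · intro hUVC
    have hspan_eq : Submodule.span ℝ S = symSub d := by
      refine le_antisymm hspan_le ?_
      intro M hM
      set W : Submodule ℝ (EuclideanSpace ℝ (Fin d × Fin d)) :=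
        (Submodule.span ℝ S).map (matEquiv d : Matrix (Fin d) (Fin d) ℝ →ₗ[ℝ] _) with hW
      set x : EuclideanSpace ℝ (Fin d × Fin d) := matEquiv d M with hx
      have hy_orth : x - (W.orthogonalProjectionOnto x : EuclideanSpace ℝ (Fin d × Fin d)) ∈ Wᗮ :=
        W.sub_starProjection_mem_orthogonal x
      set R : Matrix (Fin d) (Fin d) ℝ :=
        (matEquiv d).symm (x - (W.orthogonalProjectionOnto x : EuclideanSpace ℝ (Fin d × Fin d)))
        with hR
      have heR : matEquiv d R
          = x - (W.orthogonalProjectionOnto x : EuclideanSpace ℝ (Fin d × Fin d)) :=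
        (matEquiv d).apply_symm_apply _
      have hproj_mem : (matEquiv d).symm
          (W.orthogonalProjectionOnto x : EuclideanSpace ℝ (Fin d × Fin d))
          ∈ Submodule.span ℝ S := by
        obtain ⟨N, hN, hNe⟩ := Submodule.mem_map.mp (SetLike.coe_mem (W.orthogonalProjectionOnto x))
        rw [← hNe]
        simpa [(matEquiv d).symm_apply_apply] using hN
      have hRsymm : R.IsSymm := by
        have hRM : R = M - (matEquiv d).symm
            (W.orthogonalProjectionOnto x : EuclideanSpace ℝ (Fin d × Fin d)) := by
          rw [hR, map_sub, hx, (matEquiv d).symm_apply_apply]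
        rw [hRM]
        exact Matrix.IsSymm.sub hM (hspan_le hproj_mem)
      have hIp : ∀ N ∈ S, ∑ k, ∑ l, R k l * N k l = 0 := by
        intro N hN
        have hNW : matEquiv d N ∈ W := Submodule.mem_map_of_mem (Submodule.subset_span hN)
        have h0 := (Submodule.mem_orthogonal W _).mp hy_orth (matEquiv d N) hNW
        rw [← heR] at h0
        calc ∑ k, ∑ l, R k l * N k l
            = (inner ℝ (matEquiv d R) (matEquiv d N) : ℝ) := (inner_matEquiv R N).symm
          _ = (inner ℝ (matEquiv d N) (matEquiv d R) : ℝ) := real_inner_comm _ _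
          _ = 0 := h0
      have hedge : ∀ i j, G.Adj i j → dotProduct (p i) (R.mulVec (p j)) = 0 := by
        intro i j hij
        have h := hIp _ ⟨i, j, hij, rfl⟩
        rw [ip_gen hRsymm] at h
        linarith
      have hR0 : R = 0 := by
        refine hUVC R hRsymm ?_
        rintro i j (hij | rfl)
        · exact hedge i j hij
        · exact diag_zero G hτ p hEig hedge i
      have hxproj : x = (W.orthogonalProjectionOnto x : EuclideanSpace ℝ (Fin d × Fin d)) := by
        have h0 : matEquiv d R = 0 := by rw [hR0, map_zero]
        rw [heR] at h0
        exact sub_eq_zero.mp h0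
      have hxW : x ∈ W := hxproj ▸ SetLike.coe_mem _
      obtain ⟨N, hN, hNe⟩ := Submodule.mem_map.mp hxW
      have : N = M := (matEquiv d).injective hNe
      rwa [this] at hN
    rw [hspan_eq, finrank_symSub]
  · intro hrank R hRsymm hvan
    have hspan_eq : Submodule.span ℝ S = symSub d :=
      Submodule.eq_of_le_of_finrank_le hspan_le (by rw [hrank, finrank_symSub])
    have hRmem : R ∈ Submodule.span ℝ S := by rw [hspan_eq]; exact hRsymm
    have hzero : ∀ M ∈ Submodule.span ℝ S, ∑ k, ∑ l, R k l * M k l = 0 := by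
      intro M hM
      induction hM using Submodule.span_induction with
      | mem N hN =>
        obtain ⟨i, j, hij, rfl⟩ := hN
        rw [ip_gen hRsymm, hvan i j (Or.inl hij), mul_zero]
      | zero => simp
      | add u v hu hv ihu ihv =>
        simp only [Matrix.add_apply, mul_add, Finset.sum_add_distrib, ihu, ihv, add_zero]
      | smul c u hu ihu =>
        calc ∑ k, ∑ l, R k l * (c • u) k l = c * ∑ k, ∑ l, R k l * u k l := by
              simp only [Matrix.smul_apply, smul_eq_mul, Finset.mul_sum]
              exact Finset.sum_congr rfl fun k _ => Finset.sum_congr rfl fun l _ => by ring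
          _ = 0 := by rw [ihu, mul_zero]
    have hRR := hzero R hRmem
    have hk : ∀ k ∈ (Finset.univ : Finset (Fin d)), ∑ l, R k l * R k l = 0 :=
      (Finset.sum_eq_zero_iff_of_nonneg
        (fun k _ => Finset.sum_nonneg fun l _ => mul_self_nonneg _)).mp hRR
    have hall : ∀ k l, R k l = 0 := fun k l =>
      mul_self_eq_zero.mp ((Finset.sum_eq_zero_iff_of_nonneg
        (fun l _ => mul_self_nonneg (R k l))).mp (hk k (Finset.mem_univ k)) l (Finset.mem_univ l))
    ext k l
    simpa using hall k l
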